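/- Every directed multigraph G can be edge-decomposed into k spanning subgraphs G_1, …, G_k such that for each vertex v and each i, |d⁺_{G_i}(v) − d⁺_G(v)/k| < 1 and |d⁻_{G_i}(v) − d⁻_G(v)/k| < 1. In particular, if d⁺_G(v) or d⁻_G(v) is divisible by k, then |d_{G_i}(v) − d_G(v)/k| < 1, where d_H(v) = d⁺_H(v) + d⁻_H(v). -/

import Mathlib

open Finset

variable {V E : Type*}

/-- Out-degree of `v` in the sub-digraph given by arc set `S`; `ends e = (tail, head)`. -/
def outdeg [DecidableEq V] (ends : E → V × V) (S : Finset E) (v : V) : ℕ :=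
  (S.filter fun e => (ends e).1 = v).card

/-- In-degree of `v` in the sub-digraph given by arc set `S`. -/
def indeg [DecidableEq V] (ends : E → V × V) (S : Finset E) (v : V) : ℕ :=
  (S.filter fun e => (ends e).2 = v).card

namespace EquitFact

open Multiset

abbrev mkp {α : Type*} (p : α × α) : Sym2 α := s(p.1, p.2)

section Orient
variable {W : Type*} [DecidableEq W]

def outM (t : Multiset (W × W)) (w : W) : ℕ := t.countP (fun p => p.1 = w)
def inM (t : Multiset (W × W)) (w : W) : ℕ := t.countP (fun p => p.2 = w)

def Bal (t : Multiset (W × W)) : Prop :=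
  ∀ w, outM t w ≤ inM t w + 1 ∧ inM t w ≤ outM t w + 1

theorem orient : ∀ (n : ℕ) (m : Multiset (Sym2 W)), m.card = n →
    ∃ t : Multiset (W × W), t.map mkp = m ∧ Bal t := by
  intro n
  induction n using Nat.strong_induction_on with
  | _ n ih =>
    intro m hcard
    rcases eq_or_ne m 0 with rfl | hm0
    · exact ⟨0, by simp, fun w => by simp [outM, inM]⟩
    obtain ⟨e, he⟩ := Multiset.exists_mem_of_ne_zero hm0
    obtain ⟨m₀, rfl⟩ := Multiset.exists_cons_of_mem he
    clear he
    induction e using Sym2.inductionOn with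
    | _ a b =>
    rcases eq_or_ne a b with rfl | hab
    · -- loop
      obtain ⟨t₀, hmap, hbal⟩ := ih m₀.card (by simp at hcard; omega) m₀ rfl
      refine ⟨(a, a) ::ₘ t₀, by simp [hmap], fun w => ?_⟩
      have h := hbal w
      simp only [outM, inM, Multiset.countP_cons] at h ⊢
      split_ifs <;> omega
    by_cases hinc : ∃ e' ∈ m₀, a ∈ e' ∨ b ∈ e'
    · obtain ⟨e', he'm, hab'⟩ := hinc
      obtain ⟨m₁, rfl⟩ := Multiset.exists_cons_of_mem he'm
      rcases hab' with hmem | hmem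
      · obtain ⟨z, rfl⟩ := Sym2.mem_iff_exists.1 hmem
        obtain ⟨t', hmap, hbal⟩ := ih (s(b, z) ::ₘ m₁).card (by simp at hcard ⊢; omega)
          (s(b, z) ::ₘ m₁) rfl
        have hmem' : s(b, z) ∈ t'.map mkp := by rw [hmap]; exact Multiset.mem_cons_self _ _
        obtain ⟨p, hpt, hps⟩ := Multiset.mem_map.1 hmem'
        obtain ⟨t₁, rfl⟩ := Multiset.exists_cons_of_mem hpt
        have ht₁ : t₁.map mkp = m₁ := by
          rw [Multiset.map_cons, hps] at hmap
          exact (Multiset.cons_inj_right _).1 hmap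
        rcases (Sym2.mk_eq_mk_iff (p := p) (q := (b, z))).1 hps with rfl | rfl
        · refine ⟨(b, a) ::ₘ (a, z) ::ₘ t₁,
            by simp only [mkp, Multiset.map_cons, ht₁]; rw [Sym2.eq_swap (a := b) (b := a)], fun w => ?_⟩
          have h := hbal w
          simp only [outM, inM, Multiset.countP_cons] at h ⊢
          split_ifs at h ⊢ <;> omega
        · refine ⟨(z, a) ::ₘ (a, b) ::ₘ t₁,
            by simp only [mkp, Multiset.map_cons, ht₁, Prod.swap_prod_mk]
               rw [Sym2.eq_swap (a := z) (b := a)]; exact Multiset.cons_swap _ _ _, fun w => ?_⟩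
          have h := hbal w
          simp only [outM, inM, Multiset.countP_cons, Prod.swap_prod_mk] at h ⊢
          split_ifs at h ⊢ <;> omega
      · obtain ⟨z, rfl⟩ := Sym2.mem_iff_exists.1 hmem
        obtain ⟨t', hmap, hbal⟩ := ih (s(a, z) ::ₘ m₁).card (by simp at hcard ⊢; omega)
          (s(a, z) ::ₘ m₁) rfl
        have hmem' : s(a, z) ∈ t'.map mkp := by rw [hmap]; exact Multiset.mem_cons_self _ _
        obtain ⟨p, hpt, hps⟩ := Multiset.mem_map.1 hmem'
        obtain ⟨t₁, rfl⟩ := Multiset.exists_cons_of_mem hpt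
        have ht₁ : t₁.map mkp = m₁ := by
          rw [Multiset.map_cons, hps] at hmap
          exact (Multiset.cons_inj_right _).1 hmap
        rcases (Sym2.mk_eq_mk_iff (p := p) (q := (a, z))).1 hps with rfl | rfl
        · refine ⟨(a, b) ::ₘ (b, z) ::ₘ t₁, by simp only [mkp, Multiset.map_cons, ht₁], fun w => ?_⟩
          have h := hbal w
          simp only [outM, inM, Multiset.countP_cons] at h ⊢
          split_ifs at h ⊢ <;> omega
        · refine ⟨(z, b) ::ₘ (b, a) ::ₘ t₁,
            by simp only [mkp, Multiset.map_cons, ht₁, Prod.swap_prod_mk]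
               rw [Sym2.eq_swap (a := b) (b := a), Sym2.eq_swap (a := z) (b := b)]
               exact Multiset.cons_swap _ _ _, fun w => ?_⟩
          have h := hbal w
          simp only [outM, inM, Multiset.countP_cons, Prod.swap_prod_mk] at h ⊢
          split_ifs at h ⊢ <;> omega
    · push_neg at hinc
      obtain ⟨t₀, hmap, hbal⟩ := ih m₀.card (by simp at hcard; omega) m₀ rfl
      have hz : ∀ p ∈ t₀, p.1 ≠ a ∧ p.1 ≠ b ∧ p.2 ≠ a ∧ p.2 ≠ b := by
        intro p hp
        have hpm : mkp p ∈ m₀ := hmap ▸ Multiset.mem_map_of_mem _ hp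
        have h1 := (hinc _ hpm).1
        have h2 := (hinc _ hpm).2
        obtain ⟨p1, p2⟩ := p
        refine ⟨fun h => h1 (h ▸ Sym2.mem_mk_left _ _), fun h => h2 (h ▸ Sym2.mem_mk_left _ _),
          fun h => h1 (h ▸ Sym2.mem_mk_right _ _), fun h => h2 (h ▸ Sym2.mem_mk_right _ _)⟩
      refine ⟨(a, b) ::ₘ t₀, by simp [hmap], fun w => ?_⟩
      have h := hbal w
      by_cases hwa : a = w
      · subst hwa
        have h1 : outM t₀ a = 0 := Multiset.countP_eq_zero.2 fun p hp h => (hz p hp).1 h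
        have h2 : inM t₀ a = 0 := Multiset.countP_eq_zero.2 fun p hp h => (hz p hp).2.2.1 h
        simp only [outM, inM, Multiset.countP_cons] at h1 h2 ⊢
        split_ifs <;> omega
      by_cases hwb : b = w
      · subst hwb
        have h1 : outM t₀ b = 0 := Multiset.countP_eq_zero.2 fun p hp h => (hz p hp).2.1 h
        have h2 : inM t₀ b = 0 := Multiset.countP_eq_zero.2 fun p hp h => (hz p hp).2.2.2 h
        simp only [outM, inM, Multiset.countP_cons] at h1 h2 ⊢
        split_ifs <;> omega
      · simp only [outM, inM, Multiset.countP_cons] at h ⊢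
        split_ifs <;>
          first
            | omega
            | (exfalso; first | exact hwa (by assumption) | exact hwb (by assumption))
end Orient

section Halve
variable {V' : Type*} [DecidableEq V']

def phi (x : V' × V') : (V' × Bool) × (V' × Bool) := ((x.1, true), (x.2, false))

theorem split_sum : ∀ {t : Multiset ((V' × Bool) × (V' × Bool))} {s : Multiset (V' × V')},
    Multiset.Rel (fun p x => mkp p = mkp (phi x)) t s →
    (t.filter (fun p => p.1.2 = true)).map (fun p => (p.1.1, p.2.1)) +
      (t.filter (fun p => ¬(p.1.2 = true))).map (fun p => (p.2.1, p.1.1)) = s := by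
  intro t s h
  induction h with
  | zero => simp
  | @cons p x t' s' hpx _ ih =>
    rcases (Sym2.mk_eq_mk_iff (p := p) (q := phi x)).1 hpx with rfl | heq
    · rw [Multiset.filter_cons_of_pos _ (by simp [phi]), Multiset.filter_cons_of_neg _ (by simp [phi]),
        Multiset.map_cons, Multiset.cons_add, ih]
      simp [phi]
    · rw [heq]
      rw [Multiset.filter_cons_of_neg _ (by simp [phi]), Multiset.filter_cons_of_pos _ (by simp [phi]),
        Multiset.map_cons, Multiset.add_cons, ih]
      simp [phi]

theorem halve (s : Multiset (V' × V')) :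
    ∃ s₁ s₂ : Multiset (V' × V'), s₁ + s₂ = s ∧ ∀ v : V',
      (outM s₁ v ≤ outM s₂ v + 1 ∧ outM s₂ v ≤ outM s₁ v + 1) ∧
      (inM s₁ v ≤ inM s₂ v + 1 ∧ inM s₂ v ≤ inM s₁ v + 1) := by
  obtain ⟨t, hmap, hbal⟩ := orient (s.map fun x => mkp (phi x)).card _ rfl
  have hrel : Multiset.Rel (fun p x => mkp p = mkp (phi x)) t s :=
    (Multiset.rel_map).1 (Multiset.rel_eq.2 hmap)
  have hmix : ∀ p ∈ t, p.1.2 = true ↔ ¬(p.2.2 = true) := by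
    intro p hp
    have hmem : mkp p ∈ s.map (fun x => mkp (phi x)) := hmap ▸ Multiset.mem_map_of_mem _ hp
    obtain ⟨x, -, hx⟩ := Multiset.mem_map.1 hmem
    rcases (Sym2.mk_eq_mk_iff (p := p) (q := phi x)).1 hx.symm with rfl | heq
    · simp [phi]
    · rw [heq]; simp [phi]
  refine ⟨(t.filter (fun p => p.1.2 = true)).map (fun p => (p.1.1, p.2.1)),
    (t.filter (fun p => ¬(p.1.2 = true))).map (fun p => (p.2.1, p.1.1)),
    split_sum hrel, fun v => ?_⟩
  have e1 : outM ((t.filter (fun p => p.1.2 = true)).map (fun p => (p.1.1, p.2.1))) v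
      = outM t (v, true) := by
    rw [outM, Multiset.countP_map, ← Multiset.countP_eq_card_filter, Multiset.countP_filter, outM]
    exact Multiset.countP_congr rfl fun p hp => by
      have hm := hmix p hp
      cases h1 : p.1.2 <;> cases h2 : p.2.2 <;> simp_all [Prod.ext_iff]
  have e2 : outM ((t.filter (fun p => ¬(p.1.2 = true))).map (fun p => (p.2.1, p.1.1))) v
      = inM t (v, true) := by
    rw [outM, Multiset.countP_map, ← Multiset.countP_eq_card_filter, Multiset.countP_filter, inM]
    exact Multiset.countP_congr rfl fun p hp => by
      have hm := hmix p hp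
      cases h1 : p.1.2 <;> cases h2 : p.2.2 <;> simp_all [Prod.ext_iff]
  have e3 : inM ((t.filter (fun p => p.1.2 = true)).map (fun p => (p.1.1, p.2.1))) v
      = inM t (v, false) := by
    rw [inM, Multiset.countP_map, ← Multiset.countP_eq_card_filter, Multiset.countP_filter, inM]
    exact Multiset.countP_congr rfl fun p hp => by
      have hm := hmix p hp
      cases h1 : p.1.2 <;> cases h2 : p.2.2 <;> simp_all [Prod.ext_iff]
  have e4 : inM ((t.filter (fun p => ¬(p.1.2 = true))).map (fun p => (p.2.1, p.1.1))) v
      = outM t (v, false) := by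
    rw [inM, Multiset.countP_map, ← Multiset.countP_eq_card_filter, Multiset.countP_filter, outM]
    exact Multiset.countP_congr rfl fun p hp => by
      have hm := hmix p hp
      cases h1 : p.1.2 <;> cases h2 : p.2.2 <;> simp_all [Prod.ext_iff]
  rw [e1, e2, e3, e4]
  exact ⟨hbal (v, true), ⟨(hbal (v, false)).2, (hbal (v, false)).1⟩⟩
end Halve

lemma sq_bal {a b c d : ℕ} (hsum : c + d = a + b) (h1 : c ≤ d + 1) (h2 : d ≤ c + 1) :
    c ^ 2 + d ^ 2 ≤ a ^ 2 + b ^ 2 := by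
  have h3 : c = d ∨ c = d + 1 ∨ d = c + 1 := by omega
  rcases h3 with rfl | rfl | rfl <;> zify at hsum ⊢ <;>
    [nlinarith [sq_nonneg ((a : ℤ) - b)];
     (have h4 : b + 1 ≤ a ∨ a + 1 ≤ b := by omega
      rcases h4 with h4 | h4 <;> zify at h4 <;>
        nlinarith [sq_nonneg ((a : ℤ) - b - 1), sq_nonneg ((a : ℤ) - b + 1)]);
     (have h4 : b + 1 ≤ a ∨ a + 1 ≤ b := by omega
      rcases h4 with h4 | h4 <;> zify at h4 <;>
        nlinarith [sq_nonneg ((a : ℤ) - b - 1), sq_nonneg ((a : ℤ) - b + 1)])]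

lemma sq_bal_strict {a b c d : ℕ} (hsum : c + d = a + b) (h1 : c ≤ d + 1) (h2 : d ≤ c + 1)
    (hs : b + 2 ≤ a) : c ^ 2 + d ^ 2 < a ^ 2 + b ^ 2 := by
  have h3 : c = d ∨ c = d + 1 ∨ d = c + 1 := by omega
  rcases h3 with rfl | rfl | rfl <;> zify at hsum hs ⊢ <;>
    nlinarith [sq_nonneg ((a : ℤ) - b - 2)]

section Descent
variable {V' : Type*} [DecidableEq V'] [Fintype V']

def pot (g : Multiset (Multiset (V' × V'))) : ℕ :=
  ∑ v : V', (g.map fun m => (outM m v) ^ 2 + (inM m v) ^ 2).sum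

lemma outM_add (s t : Multiset (V' × V')) (v : V') : outM (s + t) v = outM s v + outM t v :=
  Multiset.countP_add _ _ _
lemma inM_add (s t : Multiset (V' × V')) (v : V') : inM (s + t) v = inM s v + inM t v :=
  Multiset.countP_add _ _ _

theorem descent : ∀ (N : ℕ) (g : Multiset (Multiset (V' × V'))), pot g = N →
    ∃ g' : Multiset (Multiset (V' × V')), g'.card = g.card ∧ g'.sum = g.sum ∧
      ∀ a ∈ g', ∀ b ∈ g', ∀ v : V', outM a v ≤ outM b v + 1 ∧ inM a v ≤ inM b v + 1 := by
  intro N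
  induction N using Nat.strong_induction_on with
  | _ N ih =>
    intro g hpot
    by_cases hv : ∃ a ∈ g, ∃ b ∈ g, ∃ v : V', outM b v + 2 ≤ outM a v ∨ inM b v + 2 ≤ inM a v
    · obtain ⟨a, ha, b, hb', v₀, hviol⟩ := hv
      have hne : a ≠ b := by rintro rfl; omega
      obtain ⟨g₁, rfl⟩ := Multiset.exists_cons_of_mem ha
      have hb₁ : b ∈ g₁ := by
        rcases Multiset.mem_cons.1 hb' with h | h
        · exact absurd h.symm hne
        · exact h
      obtain ⟨g₂, rfl⟩ := Multiset.exists_cons_of_mem hb₁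
      obtain ⟨s₁, s₂, hsum12, hbal12⟩ := halve (a + b)
      have hout : ∀ v, outM s₁ v + outM s₂ v = outM a v + outM b v := fun v => by
        rw [← outM_add, ← outM_add, hsum12]
      have hin : ∀ v, inM s₁ v + inM s₂ v = inM a v + inM b v := fun v => by
        rw [← inM_add, ← inM_add, hsum12]
      have hterm : ∀ v : V',
          ((outM s₁ v) ^ 2 + (inM s₁ v) ^ 2) + ((outM s₂ v) ^ 2 + (inM s₂ v) ^ 2) ≤
          ((outM a v) ^ 2 + (inM a v) ^ 2) + ((outM b v) ^ 2 + (inM b v) ^ 2) := by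
        intro v
        have o := sq_bal (hout v) (hbal12 v).1.1 (hbal12 v).1.2
        have i := sq_bal (hin v) (hbal12 v).2.1 (hbal12 v).2.2
        omega
      have hstrict :
          ((outM s₁ v₀) ^ 2 + (inM s₁ v₀) ^ 2) + ((outM s₂ v₀) ^ 2 + (inM s₂ v₀) ^ 2) <
          ((outM a v₀) ^ 2 + (inM a v₀) ^ 2) + ((outM b v₀) ^ 2 + (inM b v₀) ^ 2) := by
        have o := sq_bal (hout v₀) (hbal12 v₀).1.1 (hbal12 v₀).1.2
        have i := sq_bal (hin v₀) (hbal12 v₀).2.1 (hbal12 v₀).2.2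
        rcases hviol with h | h
        · have := sq_bal_strict (hout v₀) (hbal12 v₀).1.1 (hbal12 v₀).1.2 h
          omega
        · have := sq_bal_strict (hin v₀) (hbal12 v₀).2.1 (hbal12 v₀).2.2 h
          omega
      have hlt : pot (s₁ ::ₘ s₂ ::ₘ g₂) < pot (a ::ₘ b ::ₘ g₂) := by
        unfold pot
        refine Finset.sum_lt_sum (fun v _ => ?_) ⟨v₀, Finset.mem_univ _, ?_⟩
        · simp only [Multiset.map_cons, Multiset.sum_cons]
          have := hterm v
          omega
        · simp only [Multiset.map_cons, Multiset.sum_cons]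
          omega
      obtain ⟨g', hcard, hsum, hbal⟩ := ih (pot (s₁ ::ₘ s₂ ::ₘ g₂)) (hpot ▸ hlt) _ rfl
      refine ⟨g', ?_, ?_, hbal⟩
      · rw [hcard]; simp
      · rw [hsum]; simp only [Multiset.sum_cons]
        rw [← add_assoc, hsum12, add_assoc]
    · push_neg at hv
      exact ⟨g, rfl, rfl, fun a ha b hb v => by have := hv a ha b hb v; omega⟩
end Descent

section Split
variable {A E' : Type*}

lemma exists_split_map (f : E' → A) :
    ∀ (X : Multiset A), ∀ (Y : Multiset A) (m : Multiset E'), m.map f = X + Y →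
      ∃ m₁ m₂ : Multiset E', m = m₁ + m₂ ∧ m₁.map f = X ∧ m₂.map f = Y := by
  intro X
  induction X using Multiset.induction with
  | empty =>
    intro Y m h
    exact ⟨0, m, by simp, by simp, by simpa using h⟩
  | cons x X ih =>
    intro Y m h
    have hx : x ∈ m.map f := by rw [h, Multiset.cons_add]; exact Multiset.mem_cons_self _ _
    obtain ⟨e, hem, rfl⟩ := Multiset.mem_map.1 hx
    obtain ⟨m', rfl⟩ := Multiset.exists_cons_of_mem hem
    rw [Multiset.map_cons, Multiset.cons_add] at h
    obtain ⟨m₁, m₂, rfl, h1, h2⟩ := ih Y m' ((Multiset.cons_inj_right _).1 h)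
    exact ⟨e ::ₘ m₁, m₂, by rw [Multiset.cons_add], by simp [h1], h2⟩

lemma fin_split (f : E' → A) :
    ∀ (k : ℕ) (G : Fin k → Multiset A) (m : Multiset E'), m.map f = ∑ i, G i →
      ∃ M : Fin k → Multiset E', (∑ i, M i) = m ∧ ∀ i, (M i).map f = G i := by
  intro k
  induction k with
  | zero =>
    intro G m h
    refine ⟨fun _ => 0, ?_, fun i => i.elim0⟩
    simp only [Finset.univ_eq_empty, Finset.sum_empty] at h ⊢
    exact (Multiset.map_eq_zero.1 h).symm
  | succ k ih =>
    intro G m h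
    rw [Fin.sum_univ_succ] at h
    obtain ⟨m₁, m₂, rfl, h1, h2⟩ := exists_split_map f (G 0) (∑ i : Fin k, G i.succ) m h
    obtain ⟨M', hsum, hM'⟩ := ih (fun i => G i.succ) m₂ h2
    refine ⟨Fin.cases m₁ M', ?_, ?_⟩
    · rw [Fin.sum_univ_succ]
      simp [hsum]
    · intro i
      induction i using Fin.cases with
      | zero => simpa using h1
      | succ j => simpa using hM' j

lemma countP_finsum {ι : Type*} (q : E' → Prop) [DecidablePred q]
    (t : Finset ι) (F : ι → Multiset E') :
    Multiset.countP q (∑ i ∈ t, F i) = ∑ i ∈ t, Multiset.countP q (F i) := by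
  induction t using Finset.cons_induction with
  | empty => simp
  | cons a t ha ihh => simp [Finset.sum_cons, Multiset.countP_add, ihh]

end Split

lemma equit_nat {k : ℕ} (x : Fin k → ℕ) (D : ℕ) (hsum : ∑ j, x j = D)
    (hbal : ∀ i j, x i ≤ x j + 1) (i : Fin k) :
    k * x i ≤ D + (k - 1) ∧ D ≤ k * x i + (k - 1) := by
  have hkpos : 0 < k := i.pos
  have hcard : (Finset.univ.erase i).card = k - 1 := by
    rw [Finset.card_erase_of_mem (Finset.mem_univ i)]
    simp
  have hD : x i + ∑ j ∈ Finset.univ.erase i, x j = D := by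
    rw [Finset.add_sum_erase _ _ (Finset.mem_univ i)]
    exact hsum
  have hmul : k * x i = x i + (k - 1) * x i := by
    cases k with
    | zero => omega
    | succ n => simp [Nat.add_mul, Nat.succ_sub_one, Nat.add_comm]
  constructor
  · have h1 : ∑ _j ∈ Finset.univ.erase i, x i ≤ ∑ j ∈ Finset.univ.erase i, (x j + 1) :=
      Finset.sum_le_sum fun j _ => hbal i j
    rw [Finset.sum_const, hcard, smul_eq_mul, Finset.sum_add_distrib, Finset.sum_const, hcard,
      smul_eq_mul, mul_one] at h1
    omega
  · have h1 : ∑ j ∈ Finset.univ.erase i, x j ≤ ∑ _j ∈ Finset.univ.erase i, (x i + 1) :=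
      Finset.sum_le_sum fun j _ => hbal j i
    rw [Finset.sum_const, hcard, smul_eq_mul] at h1
    have : (k - 1) * (x i + 1) = (k - 1) * x i + (k - 1) := by ring
    omega

lemma equit_real {k x D : ℕ} (hk : 0 < k) (h1 : k * x ≤ D + (k - 1)) (h2 : D ≤ k * x + (k - 1)) :
    |(x : ℝ) - (D : ℝ) / (k : ℝ)| < 1 := by
  have hk' : (0 : ℝ) < (k : ℝ) := by exact_mod_cast hk
  have hne : (k : ℝ) ≠ 0 := ne_of_gt hk'
  obtain ⟨K, hK⟩ : ∃ K, K = k * x := ⟨_, rfl⟩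
  rw [← hK] at h1 h2
  have hb1 : (K : ℝ) < (D : ℝ) + (k : ℝ) := by exact_mod_cast (by omega : K < D + k)
  have hb2 : (D : ℝ) < (K : ℝ) + (k : ℝ) := by exact_mod_cast (by omega : D < K + k)
  have h3 : (x : ℝ) * (k : ℝ) = (K : ℝ) := by rw [hK]; push_cast; ring
  have h4 : (x : ℝ) - (D : ℝ) / (k : ℝ) = ((K : ℝ) - (D : ℝ)) / (k : ℝ) := by
    rw [eq_div_iff hne, sub_mul, div_mul_cancel₀ _ hne, h3]
  rw [h4, abs_div, abs_of_pos hk', div_lt_one hk', abs_lt]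
  constructor <;> linarith

lemma equit_exact {k x D : ℕ} (hk : 0 < k) (h1 : k * x ≤ D + (k - 1))
    (h2 : D ≤ k * x + (k - 1)) (hd : k ∣ D) : k * x = D := by
  obtain ⟨c, rfl⟩ := hd
  have hxc : x ≤ c := by
    have : k * x < k * (c + 1) := by
      have : k * (c + 1) = k * c + k := by ring
      omega
    exact Nat.le_of_lt_succ (Nat.lt_of_mul_lt_mul_left this)
  have hcx : c ≤ x := by
    have : k * c < k * (x + 1) := by
      have : k * (x + 1) = k * x + k := by ring
      omega
    exact Nat.le_of_lt_succ (Nat.lt_of_mul_lt_mul_left this)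
  have : x = c := le_antisymm hxc hcx
  rw [this]

end EquitFact

open EquitFact Multiset in
/-- Every directed multigraph has an edge-decomposition into `k` factors equitable
with respect to both out-degrees and in-degrees; in particular the total degrees are
equitable at each vertex whose out-degree or in-degree is divisible by `k`. -/
theorem directed_equitable_factorization [Fintype V] [Fintype E] [DecidableEq V]
    (ends : E → V × V) (k : ℕ) (hk : 0 < k) :
    ∃ c : E → Fin k, ∀ v : V, ∀ i : Fin k,
      (|((outdeg ends (univ.filter fun e => c e = i) v : ℝ)) -
          (outdeg ends univ v : ℝ) / (k : ℝ)| < 1) ∧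
      (|((indeg ends (univ.filter fun e => c e = i) v : ℝ)) -
          (indeg ends univ v : ℝ) / (k : ℝ)| < 1) ∧
      ((k ∣ outdeg ends univ v ∨ k ∣ indeg ends univ v) →
        |((outdeg ends (univ.filter fun e => c e = i) v +
            indeg ends (univ.filter fun e => c e = i) v : ℕ) : ℝ) -
          ((outdeg ends univ v + indeg ends univ v : ℕ) : ℝ) / (k : ℝ)| < 1) := by
  classical
  set m : Multiset E := (univ : Finset E).val with hm
  set s : Multiset (V × V) := m.map ends with hs
  obtain ⟨g, hgcard, hgsum, hgbal⟩ :=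
    descent (pot (s ::ₘ Multiset.replicate (k - 1) (0 : Multiset (V × V))))
      (s ::ₘ Multiset.replicate (k - 1) 0) rfl
  have hcard : Multiset.card g = k := by
    rw [hgcard]; simp; omega
  have hsumg : g.sum = s := by
    rw [hgsum]; simp
  set L := g.toList with hL
  have hlen : L.length = k := by rw [hL, Multiset.length_toList, hcard]
  set G : Fin k → Multiset (V × V) := fun i => L.get (Fin.cast hlen.symm i) with hG
  have hGmem : ∀ i, G i ∈ g := fun i => by
    rw [← Multiset.mem_toList]
    exact L.get_mem _
  have hGsum : ∑ i, G i = s := by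
    rw [← hsumg, ← Multiset.coe_toList g, Multiset.sum_coe]
    rw [show g.toList = L from rfl]
    rw [← Fin.sum_univ_getElem L]
    exact Fintype.sum_equiv (finCongr hlen.symm) _ _ (fun i => rfl)
  obtain ⟨M, hMsum, hMmap⟩ := fin_split ends k G m hGsum.symm
  have hmemM : ∀ e : E, ∃ i, e ∈ M i := by
    intro e
    have hem : e ∈ (∑ i, M i) := by
      rw [hMsum, hm]
      exact Finset.mem_univ e
    obtain ⟨i, -, hi⟩ := Multiset.mem_sum.1 hem
    exact ⟨i, hi⟩
  choose c hc using hmemM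
  have hnodup : m.Nodup := (univ : Finset E).nodup
  have huniq : ∀ (i : Fin k) (e : E), e ∈ M i → c e = i := by
    intro i e he
    by_contra hne
    have hcnt : Multiset.count e m = 1 := Multiset.count_eq_one_of_mem hnodup (by
      rw [hm]; exact Finset.mem_univ e)
    have hsplit : Multiset.count e m = ∑ j, Multiset.count e (M j) := by
      rw [← hMsum]; exact Multiset.count_sum'
    have hpair : Multiset.count e (M i) + Multiset.count e (M (c e)) ≤
        ∑ j, Multiset.count e (M j) := by
      have hsub : ({i, c e} : Finset (Fin k)) ⊆ Finset.univ := Finset.subset_univ _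
      have := Finset.sum_le_sum_of_subset hsub (f := fun j => Multiset.count e (M j))
      rwa [Finset.sum_pair (fun h => hne h.symm)] at this
    have h1 : 1 ≤ Multiset.count e (M i) := Multiset.one_le_count_iff_mem.2 he
    have h2 : 1 ≤ Multiset.count e (M (c e)) := Multiset.one_le_count_iff_mem.2 (hc e)
    omega
  -- counting identities
  have key : ∀ (i : Fin k) (q : E → Prop) [DecidablePred q],
      Multiset.countP (fun e => c e = i ∧ q e) m = Multiset.countP q (M i) := by
    intro i q _
    rw [← hMsum, countP_finsum,
      Finset.sum_eq_single_of_mem i (Finset.mem_univ i) (fun j _ hji =>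
        Multiset.countP_eq_zero.2 fun e he hqe => hji (by rw [← huniq j e he, hqe.1]))]
    exact Multiset.countP_congr rfl fun e he => propext (and_iff_right (huniq i e he))
  have hfc : ∀ (i : Fin k) (q : E → Prop) [DecidablePred q],
      ((univ.filter fun e => c e = i).filter fun e => q e).card = Multiset.countP q (M i) := by
    intro i q _
    rw [Finset.filter_filter]
    rw [← key i q]
    rw [Finset.card_def, Finset.filter_val, Multiset.countP_eq_card_filter]
  have htot : ∀ (q : E → Prop) [DecidablePred q],
      (univ.filter fun e => q e).card = Multiset.countP q m := by
    intro q _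
    rw [Finset.card_def, Finset.filter_val, Multiset.countP_eq_card_filter]
  have hMcount : ∀ (i : Fin k) (q : (V × V) → Prop) [DecidablePred q],
      Multiset.countP (fun e => q (ends e)) (M i) = Multiset.countP q (G i) := by
    intro i q _
    rw [← hMmap i, Multiset.countP_map, ← Multiset.countP_eq_card_filter]
  -- degree abbreviations
  set xo : Fin k → V → ℕ := fun i v => Multiset.countP (fun e => (ends e).1 = v) (M i) with hxo
  set xi : Fin k → V → ℕ := fun i v => Multiset.countP (fun e => (ends e).2 = v) (M i) with hxi
  have hxoG : ∀ i v, xo i v = outM (G i) v := fun i v => hMcount i (fun p => p.1 = v)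
  have hxiG : ∀ i v, xi i v = inM (G i) v := fun i v => hMcount i (fun p => p.2 = v)
  have hobal : ∀ v (i j : Fin k), xo i v ≤ xo j v + 1 := by
    intro v i j
    rw [hxoG, hxoG]
    exact (hgbal _ (hGmem i) _ (hGmem j) v).1
  have hibal : ∀ v (i j : Fin k), xi i v ≤ xi j v + 1 := by
    intro v i j
    rw [hxiG, hxiG]
    exact (hgbal _ (hGmem i) _ (hGmem j) v).2
  have hosum : ∀ v, ∑ j, xo j v = Multiset.countP (fun e => (ends e).1 = v) m := by
    intro v
    rw [← hMsum, countP_finsum]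
  have hisum : ∀ v, ∑ j, xi j v = Multiset.countP (fun e => (ends e).2 = v) m := by
    intro v
    rw [← hMsum, countP_finsum]
  have hout_deg : ∀ (i : Fin k) v,
      outdeg ends (univ.filter fun e => c e = i) v = xo i v := by
    intro i v
    exact hfc i (fun e => (ends e).1 = v)
  have hin_deg : ∀ (i : Fin k) v,
      indeg ends (univ.filter fun e => c e = i) v = xi i v := by
    intro i v
    exact hfc i (fun e => (ends e).2 = v)
  have hout_tot : ∀ v, outdeg ends univ v = Multiset.countP (fun e => (ends e).1 = v) m :=
    fun v => htot (fun e => (ends e).1 = v)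
  have hin_tot : ∀ v, indeg ends univ v = Multiset.countP (fun e => (ends e).2 = v) m :=
    fun v => htot (fun e => (ends e).2 = v)
  refine ⟨c, fun v i => ?_⟩
  have hno := equit_nat (fun j => xo j v) _ (hosum v) (fun a b => hobal v a b) i
  have hni := equit_nat (fun j => xi j v) _ (hisum v) (fun a b => hibal v a b) i
  have hR1 : |((outdeg ends (univ.filter fun e => c e = i) v : ℝ)) -
      (outdeg ends univ v : ℝ) / (k : ℝ)| < 1 := by
    rw [hout_deg i v, hout_tot v]
    exact equit_real hk hno.1 hno.2
  have hR2 : |((indeg ends (univ.filter fun e => c e = i) v : ℝ)) -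
      (indeg ends univ v : ℝ) / (k : ℝ)| < 1 := by
    rw [hin_deg i v, hin_tot v]
    exact equit_real hk hni.1 hni.2
  refine ⟨hR1, hR2, ?_⟩
  rintro (hd | hd)
  · -- k divides out-degree: out part of the class is exact
    rw [hout_tot v] at hd
    have hex : k * xo i v = Multiset.countP (fun e => (ends e).1 = v) m :=
      equit_exact hk hno.1 hno.2 hd
    rw [hout_deg i v, hin_deg i v, hout_tot v, hin_tot v]
    have hk' : (0 : ℝ) < (k : ℝ) := by exact_mod_cast hk
    have hcast : ((Multiset.countP (fun e => (ends e).1 = v) m : ℕ) : ℝ) = k * (xo i v : ℝ) := by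
      exact_mod_cast hex.symm
    have heq : ((xo i v + xi i v : ℕ) : ℝ) -
        ((Multiset.countP (fun e => (ends e).1 = v) m +
          Multiset.countP (fun e => (ends e).2 = v) m : ℕ) : ℝ) / (k : ℝ)
        = (xi i v : ℝ) - (Multiset.countP (fun e => (ends e).2 = v) m : ℝ) / (k : ℝ) := by
      push_cast [← hex]
      field_simp
      ring
    rw [heq]
    have := equit_real hk hni.1 hni.2
    exact this
  · rw [hin_tot v] at hd
    have hex : k * xi i v = Multiset.countP (fun e => (ends e).2 = v) m :=
      equit_exact hk hni.1 hni.2 hd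
    rw [hout_deg i v, hin_deg i v, hout_tot v, hin_tot v]
    have heq : ((xo i v + xi i v : ℕ) : ℝ) -
        ((Multiset.countP (fun e => (ends e).1 = v) m +
          Multiset.countP (fun e => (ends e).2 = v) m : ℕ) : ℝ) / (k : ℝ)
        = (xo i v : ℝ) - (Multiset.countP (fun e => (ends e).1 = v) m : ℝ) / (k : ℝ) := by
      push_cast [← hex]
      field_simp
      ring
    rw [heq]
    exact equit_real hk hno.1 hno.2
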